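/- arXiv:2006.08286 — 2 statements merged into one kernel-verified Lean document; each statement's English description precedes it below -/
import Mathlib

section
/- Let N be a finitely generated nilpotent group, α an endomorphism of N, and 1 = N₀ ⊆ N₁ ⊆ ⋯ ⊆ N_c = N a central series with α(N_i) ⊆ N_i and N_i/N_{i-1} torsion-free for all i. If α_i denotes the induced endomorphism of N_i/N_{i-1}, then R(α) = ∏_{i=1}^c R(α_i). -/
open Subgroup
open scoped commutatorElement

/-- Twisted conjugacy via an endomorphism `α`. -/
def twistedConj {G : Type*} [Group G] (α : G →* G) (x y : G) : Prop :=
  ∃ z : G, x = z * y * (α z)⁻¹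

/-- The Reidemeister number (0 encodes ∞). -/
noncomputable def reidemeisterNumber {G : Type*} [Group G] (α : G →* G) : ℕ :=
  Nat.card (Quot (twistedConj α))

section Basics

variable {G : Type*} [Group G]

theorem tc_equivalence (α : G →* G) : Equivalence (twistedConj α) := by
  constructor
  · intro x; exact ⟨1, by simp⟩
  · rintro x y ⟨z, rfl⟩
    exact ⟨z⁻¹, by simp [mul_assoc]⟩
  · rintro x y w ⟨z, rfl⟩ ⟨v, rfl⟩
    exact ⟨z * v, by simp [mul_assoc]⟩

theorem tc_iff (α : G →* G) (x y : G) :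
    Quot.mk (twistedConj α) x = Quot.mk (twistedConj α) y ↔ twistedConj α x y := by
  rw [Quot.eq]
  exact Equivalence.eqvGen_iff (tc_equivalence α)

theorem quot_tc_nonempty (α : G →* G) : Nonempty (Quot (twistedConj α)) :=
  ⟨Quot.mk _ 1⟩

theorem reidemeister_congr {G' : Type*} [Group G'] (e : G ≃* G') (α : G →* G) (α' : G' →* G')
    (h : ∀ x, e (α x) = α' (e x)) : reidemeisterNumber α = reidemeisterNumber α' := by
  have h' : ∀ y, e.symm (α' y) = α (e.symm y) := by
    intro y
    have h2 := h (e.symm y)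
    rw [e.apply_symm_apply] at h2
    rw [← h2, e.symm_apply_apply]
  unfold reidemeisterNumber
  apply Nat.card_congr
  refine ⟨Quot.map e ?_, Quot.map e.symm ?_, ?_, ?_⟩
  · rintro a b ⟨z, rfl⟩
    exact ⟨e z, by simp [h z]⟩
  · rintro a b ⟨z, rfl⟩
    exact ⟨e.symm z, by simp [h' z]⟩
  · intro q
    induction q using Quot.ind with
    | mk a => show Quot.mk _ (e.symm (e a)) = Quot.mk _ a; rw [e.symm_apply_apply]
  · intro q
    induction q using Quot.ind with
    | mk a => show Quot.mk _ (e (e.symm a)) = Quot.mk _ a; rw [e.apply_symm_apply]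

/-- pushing twisted conjugacy classes through a surjection -/
theorem reidemeister_zero_of_surjective {Q : Type*} [Group Q] (π : G →* Q)
    (hπ : Function.Surjective π) (α : G →* G) (β : Q →* Q)
    (hc : ∀ x, π (α x) = β (π x)) (h0 : reidemeisterNumber β = 0) :
    reidemeisterNumber α = 0 := by
  unfold reidemeisterNumber at *
  have hne := quot_tc_nonempty β
  rw [Nat.card_eq_zero] at h0 ⊢
  rcases h0 with h | h
  · exact (h.false hne.some).elim
  · right
    have hrel : ∀ a b : G, twistedConj α a b → twistedConj β (π a) (π b) := by
      rintro a b ⟨z, rfl⟩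
      exact ⟨π z, by simp [hc z]⟩
    apply Infinite.of_surjective (Quot.map π hrel)
    intro q
    induction q using Quot.ind with
    | mk y =>
      obtain ⟨x, rfl⟩ := hπ y
      exact ⟨Quot.mk _ x, rfl⟩

end Basics

section Abelian

variable {M : Type*} [Group M]

/-- In a "commutative" group, if the Reidemeister number of `β` is finite then
`β` has no nontrivial fixed points (needs f.g. + torsion-free). -/
theorem fixed_eq_one_of_reidemeister_ne_zero (hcomm : ∀ a b : M, a * b = b * a)
    (hfg : Group.FG M) (htf : ∀ g : M, g ≠ 1 → ¬IsOfFinOrder g) (β : M →* M)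
    (hR : reidemeisterNumber β ≠ 0) : ∀ x : M, β x = x → x = 1 := by
  classical
  letI : CommGroup M := { (inferInstance : Group M) with mul_comm := hcomm }
  intro x hx
  by_contra hx1
  have hfin : Finite (Quot (twistedConj β)) := (Nat.card_ne_zero.mp hR).2
  have key : ∀ y : M, ∃ d : ℕ, 0 < d ∧ ∃ z, y ^ d = z * (β z)⁻¹ := by
    intro y
    obtain ⟨m, n, hmn, he⟩ :=
      Finite.exists_ne_map_eq_of_infinite (fun n : ℕ => Quot.mk (twistedConj β) (y ^ n))
    have hrel : ∀ m n : ℕ, m < n → twistedConj β (y ^ m) (y ^ n) →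
        ∃ d : ℕ, 0 < d ∧ ∃ z, y ^ d = z * (β z)⁻¹ := by
      rintro m n hlt ⟨z, hz⟩
      refine ⟨n - m, Nat.sub_pos_of_lt hlt, z⁻¹, ?_⟩
      have hy : y ^ n = y ^ m * y ^ (n - m) := by
        rw [← pow_add]
        congr 1
        omega
      rw [hy] at hz
      have e1 : z⁻¹ * y ^ m * β z = y ^ m * y ^ (n - m) := by
        conv_lhs => rw [hz]
        group
      have h2 : y ^ (n - m) = z⁻¹ * β z := by
        apply mul_left_cancel (a := y ^ m)
        rw [← e1, mul_assoc z⁻¹ (y ^ m) (β z), mul_comm (y ^ m) (β z), ← mul_assoc,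
          mul_comm (z⁻¹ * β z) (y ^ m)]
      rw [map_inv, inv_inv]
      exact h2
    rcases hmn.lt_or_gt with hlt | hlt
    · exact hrel m n hlt ((tc_iff β _ _).mp he)
    · exact hrel n m hlt ((tc_iff β _ _).mp he.symm)
  -- translate to the integers
  have hafg : AddGroup.FG (Additive M) := GroupFG.iff_add_fg.mp hfg
  haveI : Module.Finite ℤ (Additive M) := Module.Finite.iff_addGroup_fg.mpr hafg
  haveI : NoZeroSMulDivisors ℤ (Additive M) := by
    refine @IsAddTorsionFree.to_noZeroSMulDivisors_int _ _ (isAddTorsionFree_iff_not_isOfFinAddOrder.mpr ?_)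
    intro a ha hfo
    obtain ⟨n, hn, hna⟩ := isOfFinAddOrder_iff_nsmul_eq_zero.mp hfo
    refine htf (Additive.toMul a) (by simpa using ha) ?_
    apply isOfFinOrder_iff_pow_eq_one.mpr
    exact ⟨n, hn, by exact hna⟩
  haveI : Module.Free ℤ (Additive M) := Module.free_of_finite_type_torsion_free'
  let φm : M →* M := MonoidHom.mk' (fun z => z * (β z)⁻¹) (by
    intro a b
    show (a * b) * (β (a * b))⁻¹ = (a * (β a)⁻¹) * (b * (β b)⁻¹)
    rw [map_mul, mul_inv]
    exact mul_mul_mul_comm a b (β a)⁻¹ (β b)⁻¹)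
  let φ : Additive M →ₗ[ℤ] Additive M := (MonoidHom.toAdditive φm).toIntLinearMap
  let b := Module.Free.chooseBasis ℤ (Additive M)
  let Bm := LinearMap.toMatrix b b φ
  set x0 : Additive M := Additive.ofMul x with hx0
  have hφx0 : φ x0 = 0 := by
    show MonoidHom.toAdditive φm x0 = 0
    have : φm x = 1 := by simp [φm, hx]
    exact this
  have hx00 : x0 ≠ 0 := by simpa [x0] using hx1
  have hdet : Bm.det = 0 := by
    rw [← Matrix.exists_mulVec_eq_zero_iff]
    refine ⟨⇑(b.repr x0), ?_, ?_⟩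
    · intro hzero
      apply hx00
      have : b.repr x0 = 0 := by
        ext i
        exact congrFun hzero i
      simpa using (b.repr.map_eq_zero_iff).mp this
    · rw [LinearMap.toMatrix_mulVec_repr, hφx0]
      simp
  have hdet' : Bm.transpose.det = 0 := by rw [Matrix.det_transpose]; exact hdet
  obtain ⟨w, hw0, hwB⟩ := Matrix.exists_mulVec_eq_zero_iff.mpr hdet'
  have hvec : Matrix.vecMul w Bm = 0 := by rw [← Matrix.mulVec_transpose]; exact hwB
  set ℓ : Additive M → ℤ := fun a => dotProduct w ⇑(b.repr a) with hℓ
  have hℓφ : ∀ a, ℓ (φ a) = 0 := by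
    intro a
    show dotProduct w ⇑(b.repr (φ a)) = 0
    rw [← LinearMap.toMatrix_mulVec_repr b b φ a, Matrix.dotProduct_mulVec, hvec]
    simp
  have hℓ0 : ∀ a, ℓ a = 0 := by
    intro a
    obtain ⟨d, hd, z, hz⟩ := key (Additive.toMul a)
    have hda : (d : ℤ) • a = φ (Additive.ofMul z) := by
      show (d : ℤ) • a = MonoidHom.toAdditive φm (Additive.ofMul z)
      have : Additive.ofMul (Additive.toMul a ^ d) = Additive.ofMul (φm z) := by
        rw [hz]; rfl
      simpa [ofMul_pow, natCast_zsmul] using this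
    have h1 : ℓ ((d : ℤ) • a) = 0 := by rw [hda]; exact hℓφ _
    have h2 : ℓ ((d : ℤ) • a) = (d : ℤ) * ℓ a := by
      show dotProduct w ⇑(b.repr ((d : ℤ) • a)) = _
      rw [map_smul]
      show dotProduct w ((d : ℤ) • ⇑(b.repr a)) = _
      rw [dotProduct_smul]
      simp [ℓ, smul_eq_mul]
    have hd0 : (d : ℤ) ≠ 0 := by exact_mod_cast hd.ne'
    have := h1 ▸ h2
    exact (mul_eq_zero.mp this.symm).resolve_left hd0
  obtain ⟨i, hi⟩ := Function.ne_iff.mp hw0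
  apply hi
  have h3 := hℓ0 (b i)
  rw [hℓ] at h3
  simpa [dotProduct, Finsupp.single_apply, Finset.sum_ite_eq] using h3

end Abelian

section Noetherian

variable {G : Type*} [Group G]

theorem fg_of_mulEquiv {A B : Type*} [Group A] [Group B] (e : A ≃* B) [Group.FG A] :
    Group.FG B :=
  Group.fg_of_surjective (f := e.toMonoidHom) (fun b => ⟨e.symm b, e.apply_symm_apply b⟩)

theorem comm_subgroup_fg {A : Type*} [CommGroup A] [Group.FG A] (B : Subgroup A) : B.FG := by
  haveI : Module.Finite ℤ (Additive A) :=
    Module.Finite.iff_addGroup_fg.mpr (GroupFG.iff_add_fg.mp inferInstance)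
  rw [Subgroup.fg_iff_add_fg]
  have h := IsNoetherian.noetherian (AddSubgroup.toIntSubmodule B.toAddSubgroup)
  rwa [Submodule.fg_iff_addSubgroup_fg, AddSubgroup.toIntSubmodule_toAddSubgroup] at h

theorem fg_of_normal_quotient (N : Subgroup G) [N.Normal] (h1 : N.FG)
    (h2 : Group.FG (G ⧸ N)) : Group.FG G := by
  obtain ⟨Y, hYc, hYf⟩ := (Subgroup.fg_iff N).mp h1
  obtain ⟨X', hX'c, hX'f⟩ := (Subgroup.fg_iff (⊤ : Subgroup (G ⧸ N))).mp h2.out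
  have hπ : Function.Surjective (QuotientGroup.mk' N) := QuotientGroup.mk'_surjective N
  set σ : G ⧸ N → G := Function.surjInv hπ with hσ
  have hσ' : ∀ q, QuotientGroup.mk' N (σ q) = q := fun q => Function.surjInv_eq hπ q
  refine ⟨(Subgroup.fg_iff ⊤).mpr ⟨σ '' X' ∪ Y, ?_, (hX'f.image σ).union hYf⟩⟩
  rw [eq_top_iff]
  intro g _
  have hg : QuotientGroup.mk' N g ∈ Subgroup.closure X' := by rw [hX'c]; trivial
  have himg : Subgroup.closure X' =
      Subgroup.map (QuotientGroup.mk' N) (Subgroup.closure (σ '' X')) := by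
    rw [MonoidHom.map_closure, Set.image_image]
    congr 1
    ext q
    constructor
    · intro hq; exact ⟨q, hq, hσ' q⟩
    · rintro ⟨q', hq', rfl⟩; simp only [hσ']; exact hq'
  rw [himg] at hg
  obtain ⟨w, hw, hwg⟩ := hg
  have hmem : g * w⁻¹ ∈ N := by
    have : QuotientGroup.mk' N (g * w⁻¹) = 1 := by
      rw [map_mul, map_inv, hwg]
      simp
    rwa [← QuotientGroup.ker_mk' N, MonoidHom.mem_ker]
  have hgw : g = (g * w⁻¹) * w := by group
  rw [hgw]
  exact mul_mem
    (Subgroup.closure_mono Set.subset_union_right (hYc ▸ hmem))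
    (Subgroup.closure_mono Set.subset_union_left hw)

/-- iterated commutator sets -/
def commSet (S : Set G) : ℕ → Set G
  | 0 => S
  | n + 1 => Set.image2 (fun x s => ⁅x, s⁆) (commSet S n) S

theorem commSet_finite {S : Set G} (hS : S.Finite) (n : ℕ) : (commSet S n).Finite := by
  induction n with
  | zero => exact hS
  | succ n ih => exact Set.Finite.image2 _ ih hS

theorem commSet_subset {S : Set G} (n : ℕ) : commSet S n ⊆ Subgroup.lowerCentralSeries (⊤ : Subgroup G) n := by
  induction n with
  | zero => intro x _; trivial
  | succ n ih =>
    rintro x ⟨p, hp, s, _, rfl⟩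
    exact commutator_mem_commutator (ih hp) (mem_top _)

theorem lcs_map_surjective {H : Type*} [Group H] (f : G →* H) (hf : Function.Surjective f)
    (n : ℕ) : (Subgroup.lowerCentralSeries (⊤ : Subgroup G) n).map f = Subgroup.lowerCentralSeries (⊤ : Subgroup H) n := by
  induction n with
  | zero => exact Subgroup.map_top_of_surjective f hf
  | succ n ih =>
    show Subgroup.map f ⁅Subgroup.lowerCentralSeries (⊤ : Subgroup G) n, ⊤⁆ = ⁅Subgroup.lowerCentralSeries (⊤ : Subgroup H) n, ⊤⁆
    rw [Subgroup.map_commutator, ih, Subgroup.map_top_of_surjective f hf]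

theorem lcs_eq_closure_sup {S : Set G} (hS : Subgroup.closure S = ⊤) (n : ℕ) :
    Subgroup.lowerCentralSeries (⊤ : Subgroup G) n = Subgroup.closure (commSet S n) ⊔ Subgroup.lowerCentralSeries (⊤ : Subgroup G) (n + 1) := by
  induction n with
  | zero =>
    apply le_antisymm
    · rw [Subgroup.lowerCentralSeries_zero, ← hS]
      exact le_trans le_sup_left le_rfl
    · exact le_top
  | succ n ih =>
    refine le_antisymm ?_ (sup_le ((Subgroup.closure_le _).mpr (commSet_subset (n + 1)))
      (Subgroup.lowerCentralSeries_antitone ⊤ (Nat.le_succ (n + 1))))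
    · set Kq := Subgroup.lowerCentralSeries (⊤ : Subgroup G) (n + 2) with hKq
      set π := QuotientGroup.mk' Kq with hπdef
      have hπ : Function.Surjective π := QuotientGroup.mk'_surjective Kq
      set Wb := Subgroup.closure (π '' commSet S (n + 1)) with hWb
      have hbot : Subgroup.lowerCentralSeries (⊤ : Subgroup (G ⧸ Kq)) (n + 2) = ⊥ := by
        rw [← lcs_map_surjective π hπ (n + 2)]
        exact (Subgroup.map_eq_bot_iff _).mpr (by rw [QuotientGroup.ker_mk'])
      have hcent : ∀ p ∈ Subgroup.lowerCentralSeries (⊤ : Subgroup (G ⧸ Kq)) (n + 1), ∀ g : G ⧸ Kq,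
          p * g = g * p := by
        intro p hp g
        have h1 : ⁅p, g⁆ ∈ Subgroup.lowerCentralSeries (⊤ : Subgroup (G ⧸ Kq)) (n + 2) :=
          commutator_mem_commutator hp (Subgroup.mem_top g)
        rw [hbot] at h1
        exact commutatorElement_eq_one_iff_mul_comm.mp (Subgroup.mem_bot.mp h1)
      have hconj : ∀ p ∈ Subgroup.lowerCentralSeries (⊤ : Subgroup (G ⧸ Kq)) (n + 1), ∀ a : G ⧸ Kq,
          a * p * a⁻¹ = p := by
        intro p hp a
        rw [← hcent p hp a]
        group
      -- the subgroup of elements of the n-th term all of whose commutators lie in Wb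
      let T : Subgroup (G ⧸ Kq) :=
    { carrier := {p | p ∈ Subgroup.lowerCentralSeries (⊤ : Subgroup (G ⧸ Kq)) n ∧ ∀ g, ⁅p, g⁆ ∈ Wb}
      one_mem' := ⟨Subgroup.one_mem _, fun g => by
        rw [commutatorElement_one_left]; exact Subgroup.one_mem _⟩
      mul_mem' := by
        rintro a b ⟨ha1, ha2⟩ ⟨hb1, hb2⟩
        refine ⟨Subgroup.mul_mem _ ha1 hb1, fun g => ?_⟩
        have hid : ⁅a * b, g⁆ = a * ⁅b, g⁆ * a⁻¹ * ⁅a, g⁆ := by group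
        have hbg : ⁅b, g⁆ ∈ Subgroup.lowerCentralSeries (⊤ : Subgroup (G ⧸ Kq)) (n + 1) :=
          commutator_mem_commutator hb1 (Subgroup.mem_top g)
        rw [hid, hconj _ hbg a]
        exact Subgroup.mul_mem _ (hb2 g) (ha2 g)
      inv_mem' := by
        rintro a ⟨ha1, ha2⟩
        refine ⟨Subgroup.inv_mem _ ha1, fun g => ?_⟩
        have hag : ⁅a, g⁆⁻¹ ∈ Subgroup.lowerCentralSeries (⊤ : Subgroup (G ⧸ Kq)) (n + 1) :=
          Subgroup.inv_mem _ (commutator_mem_commutator ha1 (Subgroup.mem_top g))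
        have hid : ⁅a⁻¹, g⁆ = a⁻¹ * ⁅a, g⁆⁻¹ * a := by group
        have h3 : a⁻¹ * ⁅a, g⁆⁻¹ * a = ⁅a, g⁆⁻¹ := by
          rw [← hcent _ hag a⁻¹]
          group
        rw [hid, h3]
        exact Subgroup.inv_mem _ (ha2 g) }
      have htopq : Subgroup.closure (π '' S) = ⊤ := by
        rw [← MonoidHom.map_closure, hS, Subgroup.map_top_of_surjective _ hπ]
      have hγn : Subgroup.lowerCentralSeries (⊤ : Subgroup (G ⧸ Kq)) n ≤ T := by
        rw [← lcs_map_surjective π hπ n, ih, Subgroup.map_sup]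
        apply sup_le
        · rw [MonoidHom.map_closure]
          apply (Subgroup.closure_le _).mpr
          rintro p ⟨xp, hxp, rfl⟩
          have hp' : (π xp : G ⧸ Kq) ∈ Subgroup.lowerCentralSeries (⊤ : Subgroup (G ⧸ Kq)) n := by
            rw [← lcs_map_surjective π hπ n]
            exact Subgroup.mem_map_of_mem π (commSet_subset n hxp)
          refine ⟨hp', ?_⟩
          -- the set of g with ⁅π xp, g⁆ ∈ Wb is a subgroup containing π '' S
          let good : Subgroup (G ⧸ Kq) :=
        { carrier := {g | ⁅(π xp : G ⧸ Kq), g⁆ ∈ Wb}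
          one_mem' := by
            show ⁅(π xp : G ⧸ Kq), (1 : G ⧸ Kq)⁆ ∈ Wb
            rw [commutatorElement_one_right]; exact Subgroup.one_mem _
          mul_mem' := by
            intro g h hg hh
            have hid : ⁅(π xp : G ⧸ Kq), g * h⁆ = ⁅(π xp : G ⧸ Kq), g⁆ *
                (g * ⁅(π xp : G ⧸ Kq), h⁆ * g⁻¹) := by group
            have hch : ⁅(π xp : G ⧸ Kq), h⁆ ∈ Subgroup.lowerCentralSeries (⊤ : Subgroup (G ⧸ Kq)) (n + 1) :=
              commutator_mem_commutator hp' (Subgroup.mem_top h)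
            show ⁅(π xp : G ⧸ Kq), g * h⁆ ∈ Wb
            rw [hid, hconj _ hch g]
            exact Subgroup.mul_mem _ hg hh
          inv_mem' := by
            intro g hg
            have hcg : ⁅(π xp : G ⧸ Kq), g⁆⁻¹ ∈ Subgroup.lowerCentralSeries (⊤ : Subgroup (G ⧸ Kq)) (n + 1) :=
              Subgroup.inv_mem _ (commutator_mem_commutator hp' (Subgroup.mem_top g))
            have hid : ⁅(π xp : G ⧸ Kq), g⁻¹⁆ = g⁻¹ * ⁅(π xp : G ⧸ Kq), g⁆⁻¹ * g := by
              group
            have h3 := hconj _ hcg g⁻¹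
            show ⁅(π xp : G ⧸ Kq), g⁻¹⁆ ∈ Wb
            rw [hid]
            have h3' : g⁻¹ * ⁅(π xp : G ⧸ Kq), g⁆⁻¹ * g = ⁅(π xp : G ⧸ Kq), g⁆⁻¹ := by
              rw [← hcent _ hcg g⁻¹]
              group
            rw [h3']
            exact Subgroup.inv_mem _ hg }
          intro g
          have hgood : (⊤ : Subgroup (G ⧸ Kq)) ≤ good := by
            rw [← htopq]
            apply (Subgroup.closure_le _).mpr
            rintro q ⟨sq, hsq, rfl⟩
            show ⁅(π xp : G ⧸ Kq), π sq⁆ ∈ Wb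
            rw [← map_commutatorElement]
            exact Subgroup.subset_closure ⟨⁅xp, sq⁆, ⟨xp, hxp, sq, hsq, rfl⟩, rfl⟩
          exact hgood (Subgroup.mem_top g)
        · intro p hp
          rw [lcs_map_surjective π hπ (n + 1)] at hp
          refine ⟨Subgroup.lowerCentralSeries_antitone ⊤ (Nat.le_succ n) hp, fun g => ?_⟩
          have h1 : ⁅p, g⁆ = 1 :=
            commutatorElement_eq_one_iff_mul_comm.mpr (hcent p hp g)
          rw [h1]; exact Subgroup.one_mem _
      have hQ : Subgroup.lowerCentralSeries (⊤ : Subgroup (G ⧸ Kq)) (n + 1) ≤ Wb := by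
        show (⁅Subgroup.lowerCentralSeries (⊤ : Subgroup (G ⧸ Kq)) n, ⊤⁆ : Subgroup (G ⧸ Kq)) ≤ Wb
        rw [Subgroup.commutator_le]
        intro p hp g _
        exact (hγn hp).2 g
      have hpull : Subgroup.lowerCentralSeries (⊤ : Subgroup G) (n + 1) ≤ Subgroup.comap π Wb :=
        Subgroup.map_le_iff_le_comap.mp (by rw [lcs_map_surjective π hπ (n + 1)]; exact hQ)
      refine le_trans hpull ?_
      have hWb' : Wb = Subgroup.map π (Subgroup.closure (commSet S (n + 1))) := by
        rw [MonoidHom.map_closure]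
      rw [hWb', Subgroup.comap_map_eq, QuotientGroup.ker_mk']

theorem lcs_fg [Group.FG G] {c : ℕ} (h : Subgroup.lowerCentralSeries (⊤ : Subgroup G) c = ⊥) (n : ℕ) :
    (Subgroup.lowerCentralSeries (⊤ : Subgroup G) n).FG := by
  obtain ⟨S, hSc, hSf⟩ := Group.fg_iff.mp ‹Group.FG G›
  have hbotfg : (⊥ : Subgroup G).FG :=
    (Subgroup.fg_iff _).mpr ⟨∅, by simp, Set.finite_empty⟩
  have key : ∀ k, (Subgroup.lowerCentralSeries (⊤ : Subgroup G) (c - k)).FG := by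
    intro k
    induction k with
    | zero => rw [Nat.sub_zero, h]; exact hbotfg
    | succ k ih =>
      by_cases hk : c ≤ k
      · have he : c - (k + 1) = c - k := by omega
        rw [he]; exact ih
      · have hck : c - k = (c - (k + 1)) + 1 := by omega
        rw [hck] at ih
        obtain ⟨F, hFc, hFf⟩ := (Subgroup.fg_iff _).mp ih
        rw [lcs_eq_closure_sup hSc (c - (k + 1)), ← hFc, ← Subgroup.closure_union]
        exact (Subgroup.fg_iff _).mpr ⟨_, rfl, (commSet_finite hSf _).union hFf⟩
  by_cases hn : n ≤ c
  · have he : n = c - (c - n) := by omega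
    rw [he]; exact key (c - n)
  · have hle : Subgroup.lowerCentralSeries (⊤ : Subgroup G) n ≤ Subgroup.lowerCentralSeries (⊤ : Subgroup G) c :=
      Subgroup.lowerCentralSeries_antitone ⊤ (by omega)
    have : Subgroup.lowerCentralSeries (⊤ : Subgroup G) n = ⊥ := le_bot_iff.mp (h ▸ hle)
    rw [this]; exact hbotfg

theorem subgroup_fg_aux : ∀ (c : ℕ) {G : Type*} [Group G] [Group.FG G],
    Subgroup.lowerCentralSeries (⊤ : Subgroup G) c = ⊥ → ∀ K : Subgroup G, K.FG := by
  intro c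
  induction c with
  | zero =>
    intro G _ _ h K
    have hK : K = ⊥ := by
      rw [eq_bot_iff]
      intro x _
      have hx : x ∈ Subgroup.lowerCentralSeries (⊤ : Subgroup G) 0 := Subgroup.mem_top x
      rwa [h] at hx
    rw [hK]
    exact (Subgroup.fg_iff _).mpr ⟨∅, by simp, Set.finite_empty⟩
  | succ c ih =>
    intro G _ _ h K
    set M := Subgroup.lowerCentralSeries (⊤ : Subgroup G) c with hM
    have hMcent : ∀ m ∈ M, ∀ g : G, m * g = g * m := by
      intro m hm g
      have h1 : ⁅m, g⁆ ∈ Subgroup.lowerCentralSeries (⊤ : Subgroup G) (c + 1) :=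
        commutator_mem_commutator hm (Subgroup.mem_top g)
      rw [h] at h1
      exact commutatorElement_eq_one_iff_mul_comm.mp (Subgroup.mem_bot.mp h1)
    have hMfg : M.FG := lcs_fg h c
    set π := QuotientGroup.mk' M with hπdef
    have hπ : Function.Surjective π := QuotientGroup.mk'_surjective M
    have hQc : Subgroup.lowerCentralSeries (⊤ : Subgroup (G ⧸ M)) c = ⊥ := by
      rw [← lcs_map_surjective π hπ c]
      exact (Subgroup.map_eq_bot_iff _).mpr (by rw [QuotientGroup.ker_mk'])
    set f := π.comp K.subtype with hf
    have hker : f.ker = M.subgroupOf K := by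
      ext x
      rw [MonoidHom.mem_ker, Subgroup.mem_subgroupOf]
      show (QuotientGroup.mk (x : G) : G ⧸ M) = 1 ↔ _
      rw [QuotientGroup.eq_one_iff]
    apply (Group.fg_iff_subgroup_fg K).mp
    have hkerfg : Group.FG f.ker := by
      rw [hker, ← Subgroup.inf_subgroupOf_right]
      letI : CommGroup ↥M :=
        { (inferInstance : Group ↥M) with
          mul_comm := fun a b => Subtype.ext (hMcent a a.2 b) }
      haveI : Group.FG ↥M := (Group.fg_iff_subgroup_fg M).mpr hMfg
      have h1 : ((M ⊓ K).subgroupOf M).FG := comm_subgroup_fg _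
      haveI h2 : Group.FG ↥((M ⊓ K).subgroupOf M) := (Group.fg_iff_subgroup_fg _).mpr h1
      have e1 : ↥((M ⊓ K).subgroupOf M) ≃* ↥(M ⊓ K) :=
        Subgroup.subgroupOfEquivOfLe inf_le_left
      have e2 : ↥(M ⊓ K) ≃* ↥((M ⊓ K).subgroupOf K) :=
        (Subgroup.subgroupOfEquivOfLe inf_le_right).symm
      haveI h3 : Group.FG ↥(M ⊓ K) := fg_of_mulEquiv e1
      exact fg_of_mulEquiv e2
    have hquotfg : Group.FG (K ⧸ f.ker) := by
      have e := QuotientGroup.quotientKerEquivRange f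
      haveI : Group.FG ↥f.range := (Group.fg_iff_subgroup_fg f.range).mpr (ih hQc f.range)
      exact fg_of_mulEquiv e.symm
    exact fg_of_normal_quotient f.ker ((Group.fg_iff_subgroup_fg _).mp hkerfg) hquotfg

theorem subgroup_fg [Group.FG G] [Group.IsNilpotent G] (K : Subgroup G) : K.FG := by
  obtain ⟨c, hc⟩ := Subgroup.nilpotent_iff_lowerCentralSeries.mp ‹Group.IsNilpotent G›
  exact subgroup_fg_aux c hc K

end Noetherian

section Fac

variable {G : Type*} [Group G]

theorem subgroupOf_normal_of_central {K L : Subgroup G} (h : ⁅(⊤ : Subgroup G), L⁆ ≤ K) :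
    (K.subgroupOf L).Normal := by
  constructor
  intro n hn g
  have h1 : (↑(g * n * g⁻¹) : G) = ⁅(g : G), (n : G)⁆ * n := by
    simp [commutatorElement_def, mul_assoc]
  show ((g * n * g⁻¹ : L) : G) ∈ K
  rw [h1]
  exact mul_mem (h (commutator_mem_commutator (mem_top _) n.2)) hn

def resEndo (α : G →* G) (L : Subgroup G) (hL : ∀ x ∈ L, α x ∈ L) : ↥L →* ↥L where
  toFun x := ⟨α x, hL x x.2⟩
  map_one' := by ext; simp
  map_mul' x y := by ext; simp

@[simp] theorem resEndo_apply (α : G →* G) (L : Subgroup G) (hL) (x : L) :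
    (resEndo α L hL x : G) = α x := rfl

def facEndo (α : G →* G) (K L : Subgroup G) [h : (K.subgroupOf L).Normal]
    (hK : ∀ x ∈ K, α x ∈ K) (hL : ∀ x ∈ L, α x ∈ L) :
    (L ⧸ K.subgroupOf L) →* (L ⧸ K.subgroupOf L) :=
  QuotientGroup.map _ _ (resEndo α L hL) (by
    intro x hx
    exact hK _ hx)

@[simp] theorem facEndo_mk (α : G →* G) (K L : Subgroup G) [h : (K.subgroupOf L).Normal]
    (hK) (hL) (x : L) :
    facEndo α K L hK hL (QuotientGroup.mk x) = QuotientGroup.mk (⟨α x, hL x x.2⟩ : L) := rfl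

noncomputable def facR (α : G →* G) (K L : Subgroup G) (hc : ⁅(⊤ : Subgroup G), L⁆ ≤ K)
    (hK : ∀ x ∈ K, α x ∈ K) (hL : ∀ x ∈ L, α x ∈ L) : ℕ :=
  letI := subgroupOf_normal_of_central hc
  reidemeisterNumber (facEndo α K L hK hL)

theorem facR_bot (α : G →* G) {K : Subgroup G} (L : Subgroup G) (hbot : K = ⊥)
    (hc : ⁅(⊤ : Subgroup G), L⁆ ≤ K)
    (hK : ∀ x ∈ K, α x ∈ K) (hL : ∀ x ∈ L, α x ∈ L) :
    facR α K L hc hK hL = reidemeisterNumber (resEndo α L hL) := by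
  subst hbot
  letI := subgroupOf_normal_of_central hc
  unfold facR
  have hker : ∀ x ∈ (⊥ : Subgroup G).subgroupOf L, (MonoidHom.id ↥L) x = 1 := by
    intro x hx
    rw [Subgroup.bot_subgroupOf] at hx
    simpa using hx
  set ψ := QuotientGroup.lift ((⊥ : Subgroup G).subgroupOf L) (MonoidHom.id ↥L) hker with hψ
  have hsur : Function.Surjective ψ := by
    intro y; exact ⟨QuotientGroup.mk y, rfl⟩
  have hinj : Function.Injective ψ := by
    apply (injective_iff_map_eq_one ψ).mpr
    intro q hq
    induction q using QuotientGroup.induction_on with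
    | H x =>
      have : x = 1 := hq
      rw [this]
      rfl
  exact reidemeister_congr (MulEquiv.ofBijective ψ ⟨hinj, hsur⟩) _ _ (by
    intro q
    induction q using QuotientGroup.induction_on with
    | H x => rfl)

theorem facR_of_surjective {Q : Type*} [Group Q] (α : G →* G) (π : G →* Q)
    (hπ : Function.Surjective π) (β : Q →* Q) (hcomm : ∀ x, π (α x) = β (π x))
    (K L : Subgroup G) (hker : π.ker ≤ K) (hKL : K ≤ L)
    (hc : ⁅(⊤ : Subgroup G), L⁆ ≤ K) (hK : ∀ x ∈ K, α x ∈ K) (hL : ∀ x ∈ L, α x ∈ L)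
    (hc' : ⁅(⊤ : Subgroup Q), L.map π⁆ ≤ K.map π) (hK' : ∀ x ∈ K.map π, β x ∈ K.map π)
    (hL' : ∀ x ∈ L.map π, β x ∈ L.map π) :
    facR β (K.map π) (L.map π) hc' hK' hL' = facR α K L hc hK hL := by
  letI := subgroupOf_normal_of_central hc
  letI := subgroupOf_normal_of_central hc'
  unfold facR
  rw [eq_comm]
  set θ : ↥L →* ((L.map π) ⧸ (K.map π).subgroupOf (L.map π)) :=
    (QuotientGroup.mk' _).comp (π.subgroupMap L) with hθ
  have hθs : Function.Surjective θ :=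
    (QuotientGroup.mk'_surjective _).comp (π.subgroupMap_surjective L)
  have hvanish : ∀ x ∈ K.subgroupOf L, θ x = 1 := by
    intro x hx
    show QuotientGroup.mk' _ (π.subgroupMap L x) = 1
    rw [← MonoidHom.mem_ker, QuotientGroup.ker_mk']
    show π (x : G) ∈ K.map π
    exact Subgroup.mem_map_of_mem π hx
  set ψ := QuotientGroup.lift (K.subgroupOf L) θ hvanish with hψ
  have hsur : Function.Surjective ψ := by
    intro y
    obtain ⟨x, rfl⟩ := hθs y
    exact ⟨QuotientGroup.mk x, rfl⟩
  have hinj : Function.Injective ψ := by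
    apply (injective_iff_map_eq_one ψ).mpr
    intro q hq
    induction q using QuotientGroup.induction_on with
    | H x =>
      have h1 : π (x : G) ∈ K.map π := by
        have h2 : θ x = 1 := hq
        rw [hθ] at h2
        have h3 := (QuotientGroup.eq_one_iff _).mp h2
        exact h3
      obtain ⟨k, hk, hkx⟩ := h1
      have h4 : (x : G) * k⁻¹ ∈ π.ker := by
        rw [MonoidHom.mem_ker, map_mul, map_inv, hkx]
        simp
      have h5 : (x : G) ∈ K := by
        have := Subgroup.mul_mem K (hker h4) hk
        simpa using this
      exact (QuotientGroup.eq_one_iff x).mpr (Subgroup.mem_subgroupOf.mpr h5)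
  exact reidemeister_congr (MulEquiv.ofBijective ψ ⟨hinj, hsur⟩) _ _ (by
    intro q
    induction q using QuotientGroup.induction_on with
    | H x =>
      show QuotientGroup.mk (π.subgroupMap L (resEndo α L hL x)) =
        QuotientGroup.mk (resEndo β (L.map π) hL' (π.subgroupMap L x))
      congr 1
      apply Subtype.ext
      exact hcomm (x : G))

theorem facR_eq_of_eq (α : G →* G) {K K' L L' : Subgroup G} (hKK : K = K') (hLL : L = L')
    (hc : ⁅(⊤ : Subgroup G), L⁆ ≤ K) (hK : ∀ x ∈ K, α x ∈ K) (hL : ∀ x ∈ L, α x ∈ L)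
    (hc' : ⁅(⊤ : Subgroup G), L'⁆ ≤ K') (hK' : ∀ x ∈ K', α x ∈ K')
    (hL' : ∀ x ∈ L', α x ∈ L') :
    facR α K L hc hK hL = facR α K' L' hc' hK' hL' := by
  subst hKK
  subst hLL
  rfl

theorem facR_eq_reidemeister (α : G →* G) {K L : Subgroup G}
    (hc : ⁅(⊤ : Subgroup G), L⁆ ≤ K) (hK : ∀ x ∈ K, α x ∈ K) (hL : ∀ x ∈ L, α x ∈ L)
    [h2 : (K.subgroupOf L).Normal]
    (β : (L ⧸ K.subgroupOf L) →* (L ⧸ K.subgroupOf L))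
    (hβ : ∀ x : ↥L, β (QuotientGroup.mk x) = QuotientGroup.mk (⟨α x, hL x x.2⟩ : ↥L)) :
    facR α K L hc hK hL = reidemeisterNumber β := by
  unfold facR
  have hfun : facEndo α K L hK hL = β := by
    apply MonoidHom.ext
    intro q
    obtain ⟨x, rfl⟩ := QuotientGroup.mk_surjective q
    rw [hβ x]
    rfl
  rw [hfun]

end Fac

section MainCount

variable {G : Type*} [Group G]

theorem main_count (α : G →* G) (H : Subgroup G) [H.Normal]
    (hcen : ∀ h ∈ H, ∀ g : G, h * g = g * h) (hαH : ∀ x ∈ H, α x ∈ H)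
    (β : G ⧸ H →* G ⧸ H) (hβ : ∀ x : G, β (QuotientGroup.mk x) = QuotientGroup.mk (α x))
    (hfix : ∀ q u : G ⧸ H, u * q * (β u)⁻¹ = q → u = 1) :
    reidemeisterNumber α = reidemeisterNumber β * reidemeisterNumber (resEndo α H hαH) := by
  classical
  set αH := resEndo α H hαH with hαHdef
  set π := QuotientGroup.mk' H with hπdef
  have hπs : Function.Surjective π := QuotientGroup.mk'_surjective H
  set σ : G ⧸ H → G := Function.surjInv hπs with hσ
  have hσ' : ∀ q, π (σ q) = q := fun q => Function.surjInv_eq hπs q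
  set rep : Quot (twistedConj β) → G := fun C => σ (Quot.out C) with hrep
  have hrepc : ∀ C, Quot.mk (twistedConj β) (π (rep C)) = C := by
    intro C; rw [hrep]; rw [hσ']; exact Quot.out_eq C
  have hβ' : ∀ x : G, π (α x) = β (π x) := by
    intro x
    rw [hπdef]
    exact (hβ x).symm
  have hwd : ∀ (C : Quot (twistedConj β)) (h h' : ↥H), twistedConj αH h h' →
      Quot.mk (twistedConj α) (rep C * ↑h) = Quot.mk (twistedConj α) (rep C * ↑h') := by
    rintro C h h' ⟨z, hz⟩
    apply Quot.sound
    refine ⟨(z : G), ?_⟩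
    have hz' : (h : G) = ↑z * ↑h' * (α ↑z)⁻¹ := by
      have := congrArg (Subtype.val) hz
      simpa [hαHdef] using this
    rw [hz', ← mul_assoc, ← mul_assoc, ← hcen (↑z) z.2 (rep C), mul_assoc (↑z : G) (rep C) ↑h']
  set Φ : Quot (twistedConj β) × Quot (twistedConj αH) → Quot (twistedConj α) :=
    fun p => Quot.lift (fun h : ↥H => Quot.mk (twistedConj α) (rep p.1 * ↑h)) (hwd p.1) p.2
    with hΦ
  have hinj : Function.Injective Φ := by
    rintro ⟨C, D⟩ ⟨C', D'⟩ heq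
    induction D using Quot.ind with
    | mk h =>
    induction D' using Quot.ind with
    | mk h' =>
    have hrel : twistedConj α (rep C * ↑h) (rep C' * ↑h') := (tc_iff α _ _).mp heq
    obtain ⟨z, hz⟩ := hrel
    have hπz : π (rep C) = π z * π (rep C') * (β (π z))⁻¹ := by
      have h6 := congrArg π hz
      simp only [map_mul, map_inv] at h6
      have hh1 : π (↑h : G) = 1 := (QuotientGroup.eq_one_iff (↑h : G)).mpr h.2
      have hh2 : π (↑h' : G) = 1 := (QuotientGroup.eq_one_iff (↑h' : G)).mpr h'.2
      rw [hh1, hh2, hβ' z] at h6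
      simpa using h6
    have hCC : C = C' := by
      rw [← hrepc C, ← hrepc C']
      exact Quot.sound ⟨π z, hπz⟩
    subst hCC
    have hz1 : π z = 1 := hfix (π (rep C)) (π z) hπz.symm
    have hzH : z ∈ H := (QuotientGroup.eq_one_iff z).mp hz1
    have hc1 : z * (rep C * ↑h') * (α z)⁻¹ = rep C * (z * ↑h' * (α z)⁻¹) := by
      have h7 := hcen z hzH (rep C)
      calc z * (rep C * ↑h') * (α z)⁻¹ = (z * rep C) * ↑h' * (α z)⁻¹ := by group
      _ = (rep C * z) * ↑h' * (α z)⁻¹ := by rw [h7]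
      _ = rep C * (z * ↑h' * (α z)⁻¹) := by group
    rw [hc1] at hz
    have hfin : (h : G) = z * ↑h' * (α z)⁻¹ := mul_left_cancel hz
    have hDD : Quot.mk (twistedConj αH) h = Quot.mk (twistedConj αH) h' :=
      Quot.sound ⟨⟨z, hzH⟩, Subtype.ext hfin⟩
    rw [hDD]
  have hsur : Function.Surjective Φ := by
    intro Q
    induction Q using Quot.ind with
    | mk x =>
    set C := Quot.mk (twistedConj β) (π x) with hC
    have h1 : twistedConj β (π x) (π (rep C)) := (tc_iff β _ _).mp (hrepc C).symm
    obtain ⟨u, hu⟩ := h1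
    obtain ⟨z, rfl⟩ := hπs u
    have h2 : π (z⁻¹ * x * α z) = π (rep C) := by
      rw [map_mul, map_mul, map_inv, hu, hβ' z]
      group
    have h3 : (rep C)⁻¹ * (z⁻¹ * x * α z) ∈ H := by
      have h4 : π ((rep C)⁻¹ * (z⁻¹ * x * α z)) = 1 := by
        rw [map_mul, map_inv, h2]
        simp
      exact (QuotientGroup.eq_one_iff _).mp h4
    refine ⟨(C, Quot.mk _ (⟨_, h3⟩ : ↥H)), ?_⟩
    show Quot.mk (twistedConj α) (rep C * ((rep C)⁻¹ * (z⁻¹ * x * α z))) = Quot.mk _ x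
    rw [mul_inv_cancel_left]
    apply Quot.sound
    refine ⟨z⁻¹, ?_⟩
    rw [map_inv, inv_inv]
  unfold reidemeisterNumber
  rw [← Nat.card_prod]
  exact (Nat.card_congr (Equiv.ofBijective Φ ⟨hinj, hsur⟩)).symm

end MainCount

section Gen

theorem genR : ∀ (c : ℕ) {G : Type*} [Group G] (α : G →* G) (s : ℕ → Subgroup G)
    (h0 : s 0 = ⊥) (htop : ∀ i, c ≤ i → s i = ⊤) (hmono : ∀ i, s i ≤ s (i + 1))
    (hcen : ∀ i, ⁅(⊤ : Subgroup G), s (i + 1)⁆ ≤ s i)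
    (hα : ∀ i, ∀ x ∈ s i, α x ∈ s i)
    (hfg : ∀ i, (s i).FG)
    (htf : ∀ i n, 0 < n → ∀ x ∈ s (i + 1), x ^ n ∈ s i → x ∈ s i),
    reidemeisterNumber α =
      ∏ i ∈ Finset.range c, facR α (s i) (s (i + 1)) (hcen i) (hα i) (hα (i + 1)) := by
  intro c
  induction c with
  | zero =>
    intro G _ α s h0 htop hmono hcen hα hfg htf
    rw [Finset.range_zero, Finset.prod_empty]
    haveI hsub : Subsingleton G := by
      constructor
      intro a b
      have ha : a ∈ s 0 := (htop 0 le_rfl).symm ▸ Subgroup.mem_top a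
      have hb : b ∈ s 0 := (htop 0 le_rfl).symm ▸ Subgroup.mem_top b
      rw [h0] at ha hb
      rw [Subgroup.mem_bot.mp ha, Subgroup.mem_bot.mp hb]
    haveI : Subsingleton (Quot (twistedConj α)) := by
      constructor
      intro a b
      induction a using Quot.ind with
      | mk x =>
      induction b using Quot.ind with
      | mk y =>
      exact congrArg _ (Subsingleton.elim x y)
    haveI : Nonempty (Quot (twistedConj α)) := quot_tc_nonempty α
    exact Nat.card_unique
  | succ c ih =>
    intro G _ α s h0 htop hmono hcen hα hfg htf
    have hmonole : Monotone s := monotone_nat_of_le_succ hmono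
    set H := s 1 with hH
    have hHcen : ∀ h ∈ H, ∀ g : G, h * g = g * h := by
      intro h hh g
      have h1 : ⁅g, h⁆ ∈ s 0 := hcen 0 (commutator_mem_commutator (Subgroup.mem_top g) hh)
      rw [h0] at h1
      exact (commutatorElement_eq_one_iff_mul_comm.mp (Subgroup.mem_bot.mp h1)).symm
    haveI hHn : H.Normal := by
      constructor
      intro n hn g
      have h2 : g * n * g⁻¹ = n := by
        rw [← hHcen n hn g]
        group
      rw [h2]
      exact hn
    set π := QuotientGroup.mk' H with hπdef
    have hπs : Function.Surjective π := QuotientGroup.mk'_surjective H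
    have hαH : ∀ x ∈ H, α x ∈ H := hα 1
    set β : (G ⧸ H) →* (G ⧸ H) := QuotientGroup.map H H α (fun x hx => hα 1 x hx) with hβdef
    have hβ' : ∀ x : G, π (α x) = β (π x) := fun x =>
      (QuotientGroup.map_mk' H H α (fun x hx => hα 1 x hx) x).symm
    set s' : ℕ → Subgroup (G ⧸ H) := fun i => (s (i + 1)).map π with hs'
    have h0' : s' 0 = ⊥ :=
      (Subgroup.map_eq_bot_iff _).mpr (by rw [QuotientGroup.ker_mk'])
    have htop' : ∀ i, c ≤ i → s' i = ⊤ := by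
      intro i hi
      show (s (i + 1)).map π = ⊤
      rw [htop (i + 1) (by omega)]
      exact Subgroup.map_top_of_surjective π hπs
    have hmono' : ∀ i, s' i ≤ s' (i + 1) := fun i => Subgroup.map_mono (hmono (i + 1))
    have hcen' : ∀ i, ⁅(⊤ : Subgroup (G ⧸ H)), s' (i + 1)⁆ ≤ s' i := by
      intro i
      have htopeq : (⊤ : Subgroup (G ⧸ H)) = Subgroup.map π ⊤ :=
        (Subgroup.map_top_of_surjective π hπs).symm
      calc ⁅(⊤ : Subgroup (G ⧸ H)), s' (i + 1)⁆
          = ⁅Subgroup.map π ⊤, Subgroup.map π (s (i + 2))⁆ := by rw [← htopeq]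
        _ = Subgroup.map π ⁅(⊤ : Subgroup G), s (i + 2)⁆ := (Subgroup.map_commutator _ _ π).symm
        _ ≤ Subgroup.map π (s (i + 1)) := Subgroup.map_mono (hcen (i + 1))
    have hα' : ∀ i, ∀ x ∈ s' i, β x ∈ s' i := by
      rintro i x ⟨y, hy, rfl⟩
      show β (π y) ∈ (s (i + 1)).map π
      rw [← hβ' y]
      exact Subgroup.mem_map_of_mem π (hα (i + 1) y hy)
    have hfg' : ∀ i, (s' i).FG := by
      intro i
      obtain ⟨F, hFc, hFf⟩ := (Subgroup.fg_iff _).mp (hfg (i + 1))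
      exact (Subgroup.fg_iff _).mpr ⟨π '' F, by
        show Subgroup.closure (π '' F) = (s (i + 1)).map π
        rw [← MonoidHom.map_closure, hFc], hFf.image π⟩
    have htf' : ∀ i n, 0 < n → ∀ x ∈ s' (i + 1), x ^ n ∈ s' i → x ∈ s' i := by
      rintro i n hn x ⟨y, hy, rfl⟩ hxn
      rw [← map_pow] at hxn
      obtain ⟨w, hw, hwy⟩ := hxn
      have h1 : y ^ n * w⁻¹ ∈ H := by
        have h2 : π (y ^ n * w⁻¹) = 1 := by
          rw [map_mul, map_inv, ← hwy]
          simp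
        exact (QuotientGroup.eq_one_iff _).mp h2
      have hH1 : H ≤ s (i + 1) := hH ▸ hmonole (by omega : 1 ≤ i + 1)
      have h2 : y ^ n ∈ s (i + 1) := by
        have h3 := Subgroup.mul_mem _ (hH1 h1) hw
        simpa using h3
      exact Subgroup.mem_map_of_mem π (htf (i + 1) n hn y hy h2)
    have ihQ := ih β s' h0' htop' hmono' hcen' hα' hfg' htf'
    have hfacs : ∀ i, facR β (s' i) (s' (i + 1)) (hcen' i) (hα' i) (hα' (i + 1)) =
        facR α (s (i + 1)) (s (i + 2)) (hcen (i + 1)) (hα (i + 1)) (hα (i + 2)) := by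
      intro i
      exact facR_of_surjective α π hπs β hβ' (s (i + 1)) (s (i + 2))
        (by rw [QuotientGroup.ker_mk']; exact hmonole (by omega : 1 ≤ i + 1))
        (hmono (i + 1)) (hcen (i + 1)) (hα (i + 1)) (hα (i + 2)) _ _ _
    by_cases hz : reidemeisterNumber β = 0
    · rw [reidemeister_zero_of_surjective π hπs α β hβ' hz, eq_comm]
      obtain ⟨j, hjr, hj0⟩ := Finset.prod_eq_zero_iff.mp (ihQ.symm.trans hz)
      refine Finset.prod_eq_zero (i := j + 1) (Finset.mem_range.mpr ?_) ?_
      · have := Finset.mem_range.mp hjr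
        omega
      · exact (hfacs j).symm.trans hj0
    · have hNoFix : ∀ q u : G ⧸ H, u * q * (β u)⁻¹ = q → u = 1 := by
        intro q u hu
        have hβu : β u = q⁻¹ * (u * q) := by
          have h7 : u * q = q * β u := by
            calc u * q = (u * q * (β u)⁻¹) * β u := by group
            _ = q * β u := by rw [hu]
          rw [h7]
          group
        have hdes : ∀ k, u ∈ s' (c - k) := by
          intro k
          induction k with
          | zero =>
            rw [Nat.sub_zero, htop' c le_rfl]
            exact Subgroup.mem_top u
          | succ k ihk =>
            by_cases hkc : c ≤ k
            · have he : c - (k + 1) = c - k := by omega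
              rw [he]
              exact ihk
            · have hck : c - k = (c - (k + 1)) + 1 := by omega
              rw [hck] at ihk
              set j := c - (k + 1) with hj
              have hRfac : facR β (s' j) (s' (j + 1)) (hcen' j) (hα' j) (hα' (j + 1)) ≠ 0 := by
                intro hzero
                exact hz (ihQ.trans
                  (Finset.prod_eq_zero (Finset.mem_range.mpr (by omega : j < c)) hzero))
              letI := subgroupOf_normal_of_central (hcen' j)
              have hcommfac : ∀ a b : (↥(s' (j + 1)) ⧸ (s' j).subgroupOf (s' (j + 1))),
                  a * b = b * a := by
                intro a b
                obtain ⟨xa, rfl⟩ := QuotientGroup.mk_surjective a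
                obtain ⟨xb, rfl⟩ := QuotientGroup.mk_surjective b
                show (QuotientGroup.mk (xa * xb) : _) = QuotientGroup.mk (xb * xa)
                rw [QuotientGroup.eq]
                apply Subgroup.mem_subgroupOf.mpr
                have hval : (((xa * xb)⁻¹ * (xb * xa) : ↥(s' (j + 1))) : G ⧸ H) =
                    ⁅((xb : G ⧸ H))⁻¹, ((xa : G ⧸ H))⁻¹⁆ := by
                  push_cast
                  rw [commutatorElement_def]
                  group
                rw [hval]
                exact hcen' j (commutator_mem_commutator (Subgroup.mem_top _)
                  (Subgroup.inv_mem _ xa.2))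
              haveI : Group.FG ↥(s' (j + 1)) := (Group.fg_iff_subgroup_fg _).mpr (hfg' (j + 1))
              have hfgfac : Group.FG (↥(s' (j + 1)) ⧸ (s' j).subgroupOf (s' (j + 1))) :=
                inferInstance
              have htffac : ∀ g : (↥(s' (j + 1)) ⧸ (s' j).subgroupOf (s' (j + 1))),
                  g ≠ 1 → ¬IsOfFinOrder g := by
                intro g hg hfo
                apply hg
                obtain ⟨xg, rfl⟩ := QuotientGroup.mk_surjective g
                obtain ⟨n, hn, hgn⟩ := isOfFinOrder_iff_pow_eq_one.mp hfo
                have h1 : QuotientGroup.mk (xg ^ n) =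
                    (1 : ↥(s' (j + 1)) ⧸ (s' j).subgroupOf (s' (j + 1))) := by
                  rw [← hgn]
                  rfl
                have h2 : xg ^ n ∈ (s' j).subgroupOf (s' (j + 1)) :=
                  (QuotientGroup.eq_one_iff _).mp h1
                have h3 : ((xg : G ⧸ H)) ^ n ∈ s' j := by
                  have h4 := Subgroup.mem_subgroupOf.mp h2
                  simpa using h4
                have h5 : (xg : G ⧸ H) ∈ s' j := htf' j n hn _ xg.2 h3
                exact (QuotientGroup.eq_one_iff _).mpr (Subgroup.mem_subgroupOf.mpr h5)
              have hfixfac := fixed_eq_one_of_reidemeister_ne_zero hcommfac hfgfac htffac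
                (facEndo β (s' j) (s' (j + 1)) (hα' j) (hα' (j + 1))) hRfac
              have hmem : (β u)⁻¹ * u ∈ s' j := by
                have h8 : (β u)⁻¹ * u = ⁅q⁻¹, u⁻¹⁆ := by
                  rw [hβu, commutatorElement_def]
                  group
                rw [h8]
                exact hcen' j (commutator_mem_commutator (Subgroup.mem_top _)
                  (Subgroup.inv_mem _ ihk))
              have hfixed : facEndo β (s' j) (s' (j + 1)) (hα' j) (hα' (j + 1))
                  (QuotientGroup.mk ⟨u, ihk⟩) = QuotientGroup.mk (⟨u, ihk⟩ : ↥(s' (j + 1))) := by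
                show QuotientGroup.mk (resEndo β (s' (j + 1)) (hα' (j + 1)) ⟨u, ihk⟩) =
                  QuotientGroup.mk (⟨u, ihk⟩ : ↥(s' (j + 1)))
                rw [QuotientGroup.eq]
                apply Subgroup.mem_subgroupOf.mpr
                simpa using hmem
              have h9 := hfixfac _ hfixed
              have h10 : (⟨u, ihk⟩ : ↥(s' (j + 1))) ∈ (s' j).subgroupOf (s' (j + 1)) :=
                (QuotientGroup.eq_one_iff _).mp h9
              exact Subgroup.mem_subgroupOf.mp h10
        have h00 := hdes c
        rw [Nat.sub_self, h0'] at h00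
        exact Subgroup.mem_bot.mp h00
      have hβmk : ∀ x : G, β (QuotientGroup.mk x) = QuotientGroup.mk (α x) := fun x =>
        (hβ' x).symm
      rw [main_count α H hHcen hαH β hβmk hNoFix, ihQ, Finset.prod_range_succ']
      congr 1
      · exact Finset.prod_congr rfl fun i _ => hfacs i
      · exact (facR_bot α (s 1) h0 (hcen 0) (hα 0) (hα 1)).symm

end Gen

theorem reidemeister_product_formula {N : Type*} [Group N] [Group.FG N] [Group.IsNilpotent N]
    (α : N →* N) (c : ℕ) (s : Fin (c + 1) → Subgroup N)
    (h0 : s 0 = ⊥) (htop : s (Fin.last c) = ⊤) (hmono : Monotone s)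
    (hnorm : ∀ i : Fin (c + 1), (s i).Normal)
    (hcentral : ∀ i : Fin c, ⁅(⊤ : Subgroup N), s i.succ⁆ ≤ s i.castSucc)
    (hα : ∀ i : Fin (c + 1), (s i).map α ≤ s i)
    [inst : ∀ i : Fin c, ((s i.castSucc).subgroupOf (s i.succ)).Normal]
    (htf : ∀ i : Fin c,
      ∀ g : ((s i.succ) ⧸ (s i.castSucc).subgroupOf (s i.succ)), g ≠ 1 → ¬IsOfFinOrder g)
    (αbar : ∀ i : Fin c,
      ((s i.succ) ⧸ (s i.castSucc).subgroupOf (s i.succ)) →*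
        ((s i.succ) ⧸ (s i.castSucc).subgroupOf (s i.succ)))
    (hαbar : ∀ (i : Fin c) (x : s i.succ),
      αbar i (QuotientGroup.mk' _ x) =
        QuotientGroup.mk' _
          (⟨α x, hα i.succ (Subgroup.mem_map_of_mem α x.2)⟩ : s i.succ)) :
    reidemeisterNumber α = ∏ i : Fin c, reidemeisterNumber (αbar i) := by
  classical
  set t : ℕ → Subgroup N := fun i =>
    s ⟨min i c, lt_of_le_of_lt (Nat.min_le_right i c) (Nat.lt_succ_self c)⟩ with ht
  have hαt : ∀ i, ∀ x ∈ t i, α x ∈ t i := by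
    intro i x hx
    exact hα _ (Subgroup.mem_map_of_mem α hx)
  have h0t : t 0 = ⊥ := by
    show s _ = ⊥
    have he : (⟨min 0 c, lt_of_le_of_lt (Nat.min_le_right 0 c) (Nat.lt_succ_self c)⟩ :
        Fin (c + 1)) = 0 := by
      ext
      simp
    rw [he, h0]
  have htopt : ∀ i, c ≤ i → t i = ⊤ := by
    intro i hi
    show s _ = ⊤
    have he : (⟨min i c, lt_of_le_of_lt (Nat.min_le_right i c) (Nat.lt_succ_self c)⟩ :
        Fin (c + 1)) = Fin.last c := by
      ext
      simp [Fin.last]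
      omega
    rw [he, htop]
  have hmonot : ∀ i, t i ≤ t (i + 1) := by
    intro i
    apply hmono
    show (⟨min i c, _⟩ : Fin (c + 1)) ≤ ⟨min (i + 1) c, _⟩
    simp only [Fin.mk_le_mk]
    omega
  have hcent : ∀ i, ⁅(⊤ : Subgroup N), t (i + 1)⁆ ≤ t i := by
    intro i
    by_cases hic : i < c
    · have e1 : t (i + 1) = s ((⟨i, hic⟩ : Fin c).succ) := by
        show s _ = s _
        congr 1
        ext
        simp [Fin.succ]
        omega
      have e2 : t i = s ((⟨i, hic⟩ : Fin c).castSucc) := by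
        show s _ = s _
        congr 1
        ext
        simp [Fin.castSucc, Fin.castAdd, Fin.castLE]
        omega
      rw [e1, e2]
      exact hcentral ⟨i, hic⟩
    · have e3 : t i = ⊤ := htopt i (by omega)
      rw [e3]
      exact le_top
  have hfgt : ∀ i, (t i).FG := fun i => subgroup_fg _
  have htft : ∀ i n, 0 < n → ∀ x ∈ t (i + 1), x ^ n ∈ t i → x ∈ t i := by
    intro i n hn x hx hxn
    by_cases hic : i < c
    · have e1 : t (i + 1) = s ((⟨i, hic⟩ : Fin c).succ) := by
        show s _ = s _
        congr 1
        ext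
        simp [Fin.succ]
        omega
      have e2 : t i = s ((⟨i, hic⟩ : Fin c).castSucc) := by
        show s _ = s _
        congr 1
        ext
        simp [Fin.castSucc, Fin.castAdd, Fin.castLE]
        omega
      rw [e2]
      rw [e1] at hx
      rw [e2] at hxn
      set fi : Fin c := ⟨i, hic⟩
      by_contra hnot
      have hg1 : (QuotientGroup.mk (⟨x, hx⟩ : ↥(s fi.succ)) :
          (s fi.succ) ⧸ (s fi.castSucc).subgroupOf (s fi.succ)) ≠ 1 := by
        intro h1
        exact hnot (Subgroup.mem_subgroupOf.mp ((QuotientGroup.eq_one_iff _).mp h1))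
      apply htf fi _ hg1
      apply isOfFinOrder_iff_pow_eq_one.mpr
      refine ⟨n, hn, ?_⟩
      have h2 : (QuotientGroup.mk (⟨x, hx⟩ : ↥(s fi.succ)) :
          (s fi.succ) ⧸ (s fi.castSucc).subgroupOf (s fi.succ)) ^ n =
          QuotientGroup.mk ((⟨x, hx⟩ : ↥(s fi.succ)) ^ n) := rfl
      rw [h2]
      apply (QuotientGroup.eq_one_iff _).mpr
      apply Subgroup.mem_subgroupOf.mpr
      simpa using hxn
    · have e3 : t i = ⊤ := htopt i (by omega)
      rw [e3]
      exact Subgroup.mem_top x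
  rw [genR c α t h0t htopt hmonot hcent hαt hfgt htft,
    ← Fin.prod_univ_eq_prod_range
      (fun i => facR α (t i) (t (i + 1)) (hcent i) (hαt i) (hαt (i + 1))) c]
  apply Finset.prod_congr rfl
  intro i _
  have hic : (i : ℕ) < c := i.isLt
  have e1 : t ((i : ℕ) + 1) = s i.succ := by
    show s _ = s _
    congr 1
    ext
    simp [Fin.succ]
  have e2 : t (i : ℕ) = s i.castSucc := by
    show s _ = s _
    congr 1
    ext
    simp only [Fin.coe_castSucc]
    omega
  have hc' : ⁅(⊤ : Subgroup N), s i.succ⁆ ≤ s i.castSucc := hcentral i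
  have hK' : ∀ x ∈ s i.castSucc, α x ∈ s i.castSucc := fun x hx =>
    hα i.castSucc (Subgroup.mem_map_of_mem α hx)
  have hL' : ∀ x ∈ s i.succ, α x ∈ s i.succ := fun x hx =>
    hα i.succ (Subgroup.mem_map_of_mem α hx)
  rw [facR_eq_of_eq α e2 e1 (hcent (i : ℕ)) (hαt (i : ℕ)) (hαt ((i : ℕ) + 1)) hc' hK' hL']
  exact facR_eq_reidemeister α hc' hK' hL' (αbar i) (fun x => hαbar i x)
end

section
/- For every partition μ of n (n ≥ 6) with m = lcm of its parts, there exists a standard Young tableau T of shape λ = (n-3,1,1,1) whose μ-index ind_μ(T) = Σ_{k ∈ D(T)} b_μ(k) is congruent to 0 mod m. -/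
/-- The hook Young diagram of shape `(n-3, 1, 1, 1)` (for `n ≥ 4`). -/
def hookDiagram (n : ℕ) (hn : 4 ≤ n) : YoungDiagram :=
  YoungDiagram.ofRowLens [n - 3, 1, 1, 1] (by simp [List.sortedGE_iff_pairwise]; omega)

/-- `T` is a standard Young tableau of shape `μ` with entries `1, …, n`. -/
def IsStandard (μ : YoungDiagram) (n : ℕ) (T : ℕ × ℕ → ℕ) : Prop :=
  Set.BijOn T (μ.cells : Set (ℕ × ℕ)) (Set.Icc 1 n) ∧
  (∀ i j : ℕ, (i, j + 1) ∈ μ → T (i, j) < T (i, j + 1)) ∧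
  (∀ i j : ℕ, (i + 1, j) ∈ μ → T (i, j) < T (i + 1, j))

/-- The descent set of a tableau. -/
def descentSet (μ : YoungDiagram) (T : ℕ × ℕ → ℕ) : Set ℕ :=
  {k | ∃ c ∈ μ.cells, ∃ c' ∈ μ.cells, T c = k ∧ T c' = k + 1 ∧ c.1 < c'.1}

/-- The lcm of the parts of a partition given as a list. -/
def partLcm (L : List ℕ) : ℕ := L.foldr Nat.lcm 1

/-- The tuple `b_μ` associated to a partition `μ = L` (0-indexed). -/
def bSeq (L : List ℕ) : List ℕ :=
  L.flatMap fun p => (List.range p).map fun i => (i + 1) * partLcm L / p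



lemma mem_hook {n : ℕ} (hn : 4 ≤ n) (i j : ℕ) :
    (i, j) ∈ hookDiagram n hn ↔ (i = 0 ∧ j < n - 3) ∨ (1 ≤ i ∧ i ≤ 3 ∧ j = 0) := by
  rw [hookDiagram, YoungDiagram.mem_ofRowLens]
  rcases i with _|_|_|_|i <;> simp <;> omega

/-- value of the `t`-th smallest element of `{1,…,n} \ {a,b,c}` -/
def fval (a b c t : ℕ) : ℕ :=
  if t < a then t else if t + 1 < b then t + 1 else if t + 2 < c then t + 2 else t + 3

def hookT (a b c : ℕ) : ℕ × ℕ → ℕ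
  | (0, j) => fval a b c (j + 1)
  | (1, 0) => a
  | (2, 0) => b
  | (3, 0) => c
  | _ => 0

section
variable {n a b c : ℕ} (hn : 6 ≤ n) (ha : 2 ≤ a) (hab : a < b) (hbc : b < c) (hc : c ≤ n)
include ha hab hbc

lemma fval_mono {s t : ℕ} (h : s < t) : fval a b c s < fval a b c t := by
  unfold fval; split_ifs <;> omega

lemma fval_ne (t : ℕ) : fval a b c t ≠ a ∧ fval a b c t ≠ b ∧ fval a b c t ≠ c := by
  unfold fval; split_ifs <;> omega

include hc hn in
lemma hook_standard : IsStandard (hookDiagram n (by omega)) n (hookT a b c) ∧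
    descentSet (hookDiagram n (by omega)) (hookT a b c) = {a - 1, b - 1, c - 1} := by
  have hmem : ∀ p : ℕ × ℕ, p ∈ (hookDiagram n (by omega : 4 ≤ n)).cells ↔
      (p.1 = 0 ∧ p.2 < n - 3) ∨ (1 ≤ p.1 ∧ p.1 ≤ 3 ∧ p.2 = 0) := by
    intro p
    rw [YoungDiagram.mem_cells (μ := hookDiagram n (by omega))]
    exact mem_hook (by omega) p.1 p.2
  -- compute hookT on the cells
  have hT0 : ∀ j : ℕ, hookT a b c (0, j) = fval a b c (j + 1) := fun _ => rfl
  have hT1 : hookT a b c (1, 0) = a := rfl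
  have hT2 : hookT a b c (2, 0) = b := rfl
  have hT3 : hookT a b c (3, 0) = c := rfl
  constructor
  · refine ⟨⟨?_, ?_, ?_⟩, ?_, ?_⟩
    · -- MapsTo
      intro p hp
      rw [Finset.mem_coe, hmem] at hp
      rcases hp with ⟨h0, hj⟩ | ⟨h1, h3, hj0⟩
      · obtain ⟨i, j⟩ := p; simp only at h0 hj; subst h0
        rw [hT0]; simp only [Set.mem_Icc]; unfold fval; split_ifs <;> omega
      · obtain ⟨i, j⟩ := p; simp only at h1 h3 hj0; subst hj0
        interval_cases i <;> simp [hT1, hT2, hT3, Set.mem_Icc] <;> omega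
    · -- InjOn
      intro p hp q hq heq
      rw [Finset.mem_coe, hmem] at hp
      rw [Finset.mem_coe, hmem] at hq
      obtain ⟨pi, pj⟩ := p; obtain ⟨qi, qj⟩ := q
      simp only at hp hq
      rcases hp with ⟨h0, hj⟩ | ⟨h1, h3, hj0⟩ <;> rcases hq with ⟨h0', hj'⟩ | ⟨h1', h3', hj0'⟩
      · subst h0 h0'
        rw [hT0, hT0] at heq
        have : pj = qj := by
          by_contra hne
          rcases Nat.lt_or_ge pj qj with h | h
          · exact absurd heq (Nat.ne_of_lt (fval_mono ha hab hbc (by omega)))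
          · exact absurd heq.symm (Nat.ne_of_lt (fval_mono ha hab hbc (by omega)))
        simp [this]
      · subst h0 hj0'
        rw [hT0] at heq
        have hne := fval_ne ha hab hbc (pj + 1)
        interval_cases qi <;> simp_all
      · subst h0' hj0
        rw [hT0] at heq
        have hne := fval_ne ha hab hbc (qj + 1)
        interval_cases pi <;> simp_all
      · subst hj0 hj0'
        interval_cases pi <;> interval_cases qi <;> simp_all <;> omega
    · -- SurjOn
      intro v hv
      simp only [Set.mem_Icc] at hv
      by_cases hva : v = a
      · exact ⟨(1, 0), by rw [Finset.mem_coe, hmem]; simp, by rw [hT1, hva]⟩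
      by_cases hvb : v = b
      · exact ⟨(2, 0), by rw [Finset.mem_coe, hmem]; simp, by rw [hT2, hvb]⟩
      by_cases hvc : v = c
      · exact ⟨(3, 0), by rw [Finset.mem_coe, hmem]; simp, by rw [hT3, hvc]⟩
      refine ⟨(0, (if v < a then v else if v < b then v - 1 else if v < c then v - 2 else v - 3) - 1),
        ?_, ?_⟩
      · rw [Finset.mem_coe, hmem]; left; constructor
        · rfl
        · split_ifs <;> omega
      · rw [hT0]; unfold fval; split_ifs <;> omega
    · -- rows increasing
      intro i j hcell
      rw [← YoungDiagram.mem_cells, hmem] at hcell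
      simp only at hcell
      have hi : i = 0 := by omega
      subst hi
      rw [hT0, hT0]
      exact fval_mono ha hab hbc (by omega)
    · -- columns increasing
      intro i j hcell
      rw [← YoungDiagram.mem_cells, hmem] at hcell
      simp only at hcell
      have hj : j = 0 := by omega
      subst hj
      have hi : i ≤ 2 := by omega
      interval_cases i
      · rw [hT0, hT1]; unfold fval; split_ifs <;> omega
      · rw [hT1, hT2]; omega
      · rw [hT2, hT3]; omega
  · -- descent set
    ext k
    simp only [descentSet, Set.mem_setOf_eq, Set.mem_insert_iff, Set.mem_singleton_iff]
    constructor
    · rintro ⟨p, hp, q, hq, hTp, hTq, hlt⟩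
      rw [hmem] at hq
      obtain ⟨qi, qj⟩ := q
      simp only at hq hlt
      have hq' : 1 ≤ qi ∧ qi ≤ 3 ∧ qj = 0 := by
        rcases hq with h | h
        · omega
        · exact h
      obtain ⟨h1, h3, h0⟩ := hq'
      subst h0
      have : k + 1 = a ∨ k + 1 = b ∨ k + 1 = c := by
        interval_cases qi
        · exact Or.inl (hTq ▸ hT1.symm ▸ rfl)
        · exact Or.inr (Or.inl (hTq ▸ hT2.symm ▸ rfl))
        · exact Or.inr (Or.inr (hTq ▸ hT3.symm ▸ rfl))
      omega
    · intro hk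
      rcases hk with hk | hk | hk
      · -- k = a - 1, k+1 = a at (1,0); a-1 = fval (a-1) at (0, a-2)
        refine ⟨(0, a - 2), by rw [hmem]; simp; omega, (1, 0), by rw [hmem]; simp, ?_, ?_, by simp⟩
        · rw [hT0]; unfold fval; split_ifs <;> omega
        · rw [hT1]; omega
      · -- k = b - 1
        by_cases hba : b = a + 1
        · refine ⟨(1, 0), by rw [hmem]; simp, (2, 0), by rw [hmem]; simp, ?_, ?_, by simp⟩
          · rw [hT1]; omega
          · rw [hT2]; omega
        · refine ⟨(0, b - 3), by rw [hmem]; simp; omega, (2, 0), by rw [hmem]; simp, ?_, ?_, by simp⟩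
          · rw [hT0]; unfold fval; split_ifs <;> omega
          · rw [hT2]; omega
      · -- k = c - 1
        by_cases hcb : c = b + 1
        · refine ⟨(2, 0), by rw [hmem]; simp, (3, 0), by rw [hmem]; simp, ?_, ?_, by simp⟩
          · rw [hT2]; omega
          · rw [hT3]; omega
        · refine ⟨(0, c - 4), by rw [hmem]; simp; omega, (3, 0), by rw [hmem]; simp, ?_, ?_, by simp⟩
          · rw [hT0]; unfold fval; split_ifs <;> omega
          · rw [hT3]; omega

end



lemma hook_exists {n i j k : ℕ} (hn : 6 ≤ n) (hi : 1 ≤ i) (hij : i < j) (hjk : j < k)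
    (hk : k < n) :
    ∃ T : ℕ × ℕ → ℕ, IsStandard (hookDiagram n (by omega)) n T ∧
      descentSet (hookDiagram n (by omega)) T = {i, j, k} := by
  obtain ⟨hstd, hdes⟩ := hook_standard (n := n) (a := i + 1) (b := j + 1) (c := k + 1) hn
    (by omega) (by omega) (by omega) (by omega)
  exact ⟨_, hstd, by simpa using hdes⟩

lemma dvd_partLcm {p : ℕ} {L : List ℕ} (h : p ∈ L) : p ∣ partLcm L := by
  induction L with
  | nil => simp at h
  | cons x xs ih =>
    rcases List.mem_cons.mp h with rfl | h
    · exact Nat.dvd_lcm_left _ _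
    · exact (ih h).trans (Nat.dvd_lcm_right _ _)

lemma partLcm_dvd {L : List ℕ} {k : ℕ} (h : ∀ p ∈ L, p ∣ k) : partLcm L ∣ k := by
  induction L with
  | nil => simpa [partLcm] using Nat.one_dvd k
  | cons x xs ih =>
    exact Nat.lcm_dvd (h x (by simp)) (ih fun p hp => h p (List.mem_cons_of_mem _ hp))

lemma getD_bSeq_head {p : ℕ} (L' : List ℕ) {t : ℕ} (ht : t < p) :
    (bSeq (p :: L')).getD t 0 = (t + 1) * partLcm (p :: L') / p := by
  rw [bSeq, List.flatMap_cons, List.getD_append _ _ _ t (by simpa using ht),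
    List.getD_eq_getElem _ _ (by simpa using ht)]
  simp

lemma length_ones {L : List ℕ} (h : ∀ x ∈ L, x = 1) : L.length = L.sum := by
  induction L with
  | nil => simp
  | cons x xs ih =>
    have hx := h x (by simp)
    simp [hx, ih fun y hy => h y (List.mem_cons_of_mem _ hy)]
    omega

lemma getD_flatMap_ones {L : List ℕ} (h : ∀ x ∈ L, x = 1) (m : ℕ) {t : ℕ}
    (ht : t < L.length) :
    (L.flatMap fun p => (List.range p).map fun i => (i + 1) * m / p).getD t 0 = m := by
  induction L generalizing t with
  | nil => simp at ht
  | cons x xs ih =>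
    have hx := h x (by simp)
    subst hx
    rw [List.flatMap_cons]
    have : (List.range 1).map (fun i => (i + 1) * m / 1) = [m] := by
      rw [show List.range 1 = [0] from rfl, List.map_cons, List.map_nil]; norm_num
    rw [this]
    cases t with
    | zero => simp
    | succ t =>
      rw [List.getD_append_right _ _ _ _ (by simp)]
      simpa using ih (fun y hy => h y (List.mem_cons_of_mem _ hy)) (by simpa using ht)

theorem exists_tableau_index_zero (n : ℕ) (hn : 6 ≤ n)
    (L : List ℕ) (hpos : ∀ p ∈ L, 0 < p) (hsorted : List.Pairwise (· ≥ ·) L)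
    (hsum : L.sum = n) :
    ∃ T : ℕ × ℕ → ℕ, IsStandard (hookDiagram n (by omega)) n T ∧
      ∃ i j k : ℕ, 1 ≤ i ∧ i < j ∧ j < k ∧ k < n ∧
        descentSet (hookDiagram n (by omega)) T = {i, j, k} ∧
        (bSeq L).getD (i - 1) 0 + (bSeq L).getD (j - 1) 0 + (bSeq L).getD (k - 1) 0 ≡ 0
          [MOD partLcm L] := by
  rcases L with _ | ⟨p, L'⟩
  · simp at hsum; omega
  rcases L' with _ | ⟨p2, L''⟩
  · -- single part: L = [n]
    have hp : p = n := by simpa using hsum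
    subst hp
    obtain ⟨T, hT, hD⟩ := hook_exists (i := 1) (j := 2) (k := p - 3) hn (by omega) (by omega)
      (by omega) (by omega)
    refine ⟨T, hT, 1, 2, p - 3, by omega, by omega, by omega, by omega, hD, ?_⟩
    have hm : partLcm [p] = p := by simp [partLcm]
    have hv : ∀ t : ℕ, t < p → (bSeq [p]).getD t 0 = t + 1 := by
      intro t ht
      rw [getD_bSeq_head _ ht, hm, Nat.mul_div_cancel _ (by omega)]
    rw [show (1:ℕ) - 1 = 0 by rfl, show (2:ℕ) - 1 = 1 by rfl,
      hv 0 (by omega), hv 1 (by omega), hv (p - 3 - 1) (by omega), hm]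
    exact (Nat.modEq_zero_iff_dvd).mpr ⟨1, by omega⟩
  -- at least two parts
  by_cases hp3 : 3 ≤ p
  · -- big head
    obtain ⟨r, rfl⟩ : ∃ r, p = r + 3 := ⟨p - 3, by omega⟩
    have hkn : r + 3 < n := by
      have h2 : 0 < p2 := hpos p2 (by simp)
      simp only [List.sum_cons] at hsum
      omega
    obtain ⟨T, hT, hD⟩ := hook_exists (i := 1) (j := r + 3 - 1) (k := r + 3) hn (by omega)
      (by omega) (by omega) hkn
    refine ⟨T, hT, 1, r + 3 - 1, r + 3, by omega, by omega, by omega, hkn, hD, ?_⟩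
    obtain ⟨q, hq⟩ := dvd_partLcm (p := r + 3) (L := (r + 3) :: p2 :: L'') (by simp)
    have hv : ∀ t : ℕ, t < r + 3 → (bSeq ((r + 3) :: p2 :: L'')).getD t 0 = (t + 1) * q := by
      intro t ht
      rw [getD_bSeq_head _ ht, hq, show (t + 1) * ((r + 3) * q) = (r + 3) * ((t + 1) * q) by ring,
        Nat.mul_div_cancel_left _ (by omega)]
    rw [show (1:ℕ) - 1 = 0 by rfl, show r + 3 - 1 - 1 = r + 1 by omega,
      hv 0 (by omega), hv (r + 1) (by omega), show r + 3 - 1 = r + 2 by omega,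
      hv (r + 2) (by omega)]
    refine (Nat.modEq_zero_iff_dvd).mpr ⟨2, ?_⟩
    rw [hq]
    ring
  · -- p ≤ 2
    have hp1 : 0 < p := hpos p (by simp)
    have hle : ∀ x ∈ p2 :: L'', x ≤ p := by
      intro x hx
      exact (List.pairwise_cons.mp hsorted).1 x hx
    interval_cases p
    · -- p = 1 : all ones, lcm = 1
      have hall : ∀ x ∈ (1 : ℕ) :: p2 :: L'', x = 1 := by
        intro x hx
        rcases List.mem_cons.mp hx with rfl | hx
        · rfl
        · have := hle x hx; have := hpos x (List.mem_cons_of_mem _ hx); omega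
      have hm : partLcm ((1:ℕ) :: p2 :: L'') = 1 :=
        Nat.dvd_one.mp (partLcm_dvd fun x hx => by rw [hall x hx])
      obtain ⟨T, hT, hD⟩ := hook_exists (i := 1) (j := 2) (k := 3) hn (by omega) (by omega)
        (by omega) (by omega)
      exact ⟨T, hT, 1, 2, 3, by omega, by omega, by omega, by omega, hD, by rw [hm]; exact Nat.modEq_one⟩
    · -- p = 2
      have hm : partLcm ((2:ℕ) :: p2 :: L'') = 2 := by
        refine Nat.dvd_antisymm (partLcm_dvd ?_) (dvd_partLcm (by simp))
        intro x hx
        rcases List.mem_cons.mp hx with rfl | hx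
        · rfl
        · have := hle x hx; have := hpos x (List.mem_cons_of_mem _ hx); interval_cases x <;> norm_num
      have hp2 : p2 = 1 ∨ p2 = 2 := by
        have := hle p2 (by simp); have := hpos p2 (by simp); omega
      rcases hp2 with rfl | rfl
      · -- L = 2 :: 1 :: L'' : all of tail ones
        have hall : ∀ x ∈ (1 : ℕ) :: L'', x = 1 := by
          intro x hx
          rcases List.mem_cons.mp hx with rfl | hx
          · rfl
          · have : x ≤ 1 := ((List.pairwise_cons.mp (List.pairwise_cons.mp hsorted).2).1 x hx)
            have := hpos x (List.mem_cons_of_mem _ (List.mem_cons_of_mem _ hx)); omega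
        have hlen : 2 ≤ ((1:ℕ) :: L'').length := by
          have h := length_ones hall
          simp only [List.length_cons, List.sum_cons] at h hsum ⊢
          omega
        obtain ⟨T, hT, hD⟩ := hook_exists (i := 2) (j := 3) (k := 4) hn (by omega) (by omega)
          (by omega) (by omega)
        refine ⟨T, hT, 2, 3, 4, by omega, by omega, by omega, by omega, hD, ?_⟩
        have h1 : (bSeq ((2:ℕ) :: 1 :: L'')).getD 1 0 = 2 := by
          rw [getD_bSeq_head _ (by omega), hm]
        have hrest : ∀ t : ℕ, t < ((1:ℕ) :: L'').length →
            (bSeq ((2:ℕ) :: 1 :: L'')).getD (2 + t) 0 = 2 := by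
          intro t ht
          rw [bSeq, List.flatMap_cons, hm,
            List.getD_append_right _ _ _ _ (by simp)]
          have : 2 + t - ((List.range 2).map fun i => (i + 1) * 2 / 2).length = t := by simp
          rw [this]
          exact getD_flatMap_ones hall 2 ht
        have h2 : (bSeq ((2:ℕ) :: 1 :: L'')).getD 2 0 = 2 := by
          have := hrest 0 (by omega); simpa using this
        have h3 : (bSeq ((2:ℕ) :: 1 :: L'')).getD 3 0 = 2 := by
          have := hrest 1 (by omega); simpa using this
        rw [show (2:ℕ) - 1 = 1 by rfl, show (3:ℕ) - 1 = 2 by rfl, show (4:ℕ) - 1 = 3 by rfl,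
          h1, h2, h3, hm]
        decide
      · -- L = 2 :: 2 :: L''
        obtain ⟨T, hT, hD⟩ := hook_exists (i := 1) (j := 2) (k := 3) hn (by omega) (by omega)
          (by omega) (by omega)
        refine ⟨T, hT, 1, 2, 3, by omega, by omega, by omega, by omega, hD, ?_⟩
        have h0 : (bSeq ((2:ℕ) :: 2 :: L'')).getD 0 0 = 1 := by
          rw [getD_bSeq_head _ (by omega), hm]
        have h1 : (bSeq ((2:ℕ) :: 2 :: L'')).getD 1 0 = 2 := by
          rw [getD_bSeq_head _ (by omega), hm]
        have h2 : (bSeq ((2:ℕ) :: 2 :: L'')).getD 2 0 = 1 := by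
          rw [bSeq, List.flatMap_cons, hm, List.getD_append_right _ _ _ _ (by simp)]
          have : (2:ℕ) - ((List.range 2).map fun i => (i + 1) * 2 / 2).length = 0 := by simp
          rw [this, List.flatMap_cons, List.getD_append _ _ _ 0 (by simp)]
          simp
        rw [show (1:ℕ) - 1 = 0 by rfl, show (2:ℕ) - 1 = 1 by rfl, show (3:ℕ) - 1 = 2 by rfl,
          h0, h1, h2, hm]
        decide
end
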